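/- For i ≥ 1, k ≥ 0, H ≥ 1, with α_i = (H+1)/(H+i), α_τ^i = α_i Π_{j=i+1}^τ (1-α_j), and w_j^i = Σ_{i'=i}^j α_{i'}^i, the identity w_{i+k}^i - w_{i+1+k}^{i+1} = (H+1)(k+1)·Π_{j=1}^k(i+j) / Π_{j=0}^{k+1}(H+i+j) holds. -/

import Mathlib

open Finset

/-- The Q-learning step size `α_i = (H+1)/(H+i)`. -/
noncomputable def qAlpha (H : ℝ) (i : ℕ) : ℝ := (H + 1) / (H + i)

/-- The cumulative weight `α_τ^i = α_i ∏_{j=i+1}^τ (1 - α_j)`. -/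
noncomputable def qW (H : ℝ) (τ i : ℕ) : ℝ :=
  qAlpha H i * ∏ j ∈ Ioc i τ, (1 - qAlpha H j)

/-- `w_j^i = Σ_{i'=i}^j α_{i'}^i`. -/
noncomputable def qWsum (H : ℝ) (j i : ℕ) : ℝ := ∑ i' ∈ Icc i j, qW H i' i

lemma prodQ_pos (H : ℝ) (hH : 1 ≤ H) (i n : ℕ) :
    0 < ∏ j ∈ range n, (H + i + j) := by
  apply Finset.prod_pos
  intro j _
  have h1 : (0:ℝ) ≤ i := Nat.cast_nonneg i
  have h2 : (0:ℝ) ≤ j := Nat.cast_nonneg j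
  linarith

lemma qW_formula (H : ℝ) (hH : 1 ≤ H) (i : ℕ) (hi : 1 ≤ i) (m : ℕ) :
    qW H (i + m) i = (H + 1) * (∏ l ∈ range m, ((i:ℝ) + l)) /
      ∏ l ∈ range (m + 1), (H + i + l) := by
  induction m with
  | zero =>
    simp [qW, qAlpha]
  | succ m ih =>
    have hsplit : qW H (i + (m+1)) i = qW H (i + m) i * (1 - qAlpha H (i + m + 1)) := by
      unfold qW
      rw [show i + (m+1) = (i + m) + 1 from rfl,
        Finset.prod_Ioc_succ_top (Nat.le_add_right i m)]
      ring
    rw [hsplit, ih]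
    have hq1 : (0:ℝ) < ∏ l ∈ range (m + 1), (H + i + l) := prodQ_pos H hH i (m+1)
    have hq2 : (0:ℝ) < ∏ l ∈ range (m + 2), (H + i + l) := prodQ_pos H hH i (m+2)
    have hd : (0:ℝ) < H + ↑(i + m + 1) := by
      have : (0:ℝ) ≤ (i + m + 1 : ℕ) := Nat.cast_nonneg _
      linarith
    rw [Finset.prod_range_succ ((fun l : ℕ => ((i:ℝ) + l))) m,
      Finset.prod_range_succ (fun l : ℕ => (H + i + l)) (m+1)]
    unfold qAlpha
    field_simp
    push_cast
    ring

theorem stmt5 (H : ℝ) (hH : 1 ≤ H) (i k : ℕ) (hi : 1 ≤ i) :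
    qWsum H (i + k) i - qWsum H (i + 1 + k) (i + 1)
      = (H + 1) * (k + 1) * (∏ j ∈ Icc 1 k, ((i : ℝ) + j))
        / ∏ j ∈ range (k + 2), (H + i + j) := by
  induction k with
  | zero =>
    have h1 : qWsum H (i + 0) i = qAlpha H i := by
      simp [qWsum, qW]
    have h2 : qWsum H (i + 1 + 0) (i + 1) = qAlpha H (i+1) := by
      simp [qWsum, qW]
    rw [h1, h2]
    unfold qAlpha
    have hd1 : (0:ℝ) < H + i := by
      have : (0:ℝ) ≤ (i:ℕ) := Nat.cast_nonneg _; linarith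
    have hd2 : (0:ℝ) < H + ↑(i+1) := by
      have : (0:ℝ) ≤ ((i+1:ℕ):ℝ) := Nat.cast_nonneg _; linarith
    have hd3 : (0:ℝ) < ∏ j ∈ range (0 + 2), (H + i + j) := prodQ_pos H hH i 2
    simp only [Finset.Icc_self, Nat.cast_zero]
    rw [show (0:ℕ)+2 = 2 from rfl]
    rw [Finset.prod_range_succ, Finset.prod_range_succ, Finset.prod_range_zero]
    field_simp
    push_cast [Finset.Icc_eq_empty_of_lt Nat.zero_lt_one, Finset.prod_empty]
    ring
  | succ k ih =>
    have hsum1 : qWsum H (i + (k+1)) i = qWsum H (i + k) i + qW H (i + (k+1)) i := by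
      unfold qWsum
      rw [show i + (k+1) = (i + k) + 1 from rfl,
        Finset.sum_Icc_succ_top (Nat.le_succ_of_le (Nat.le_add_right i k))]
    have hsum2 : qWsum H (i + 1 + (k+1)) (i+1)
        = qWsum H (i + 1 + k) (i+1) + qW H (i + 1 + (k+1)) (i+1) := by
      unfold qWsum
      rw [show i + 1 + (k+1) = (i + 1 + k) + 1 from rfl,
        Finset.sum_Icc_succ_top (Nat.le_succ_of_le (Nat.le_add_right (i+1) k))]
    have e1 : qW H (i + (k+1)) i = (H + 1) * (∏ l ∈ range (k+1), ((i:ℝ) + l)) /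
        ∏ l ∈ range (k + 2), (H + i + l) := qW_formula H hH i hi (k+1)
    have e2 : qW H (i + 1 + (k+1)) (i+1) = (H + 1) * (∏ l ∈ range (k+1), (((i+1:ℕ):ℝ) + l)) /
        ∏ l ∈ range (k + 2), (H + ↑(i+1) + l) := qW_formula H hH (i+1) (Nat.le_add_left 1 i) (k+1)
    rw [hsum1, hsum2]
    have key : qWsum H (i + k) i + qW H (i + (k + 1)) i -
        (qWsum H (i + 1 + k) (i + 1) + qW H (i + 1 + (k + 1)) (i + 1))
      = (qWsum H (i + k) i - qWsum H (i + 1 + k) (i + 1)) +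
        qW H (i + (k + 1)) i - qW H (i + 1 + (k + 1)) (i + 1) := by ring
    rw [key, ih, e1, e2]
    -- product rewrites
    have hP1 : ∏ l ∈ range (k+1), ((i:ℝ) + l) = i * ∏ j ∈ Icc 1 k, ((i:ℝ) + j) := by
      rw [Finset.prod_range_succ']
      rw [show Icc 1 k = Ico 1 (k+1) from rfl, Finset.prod_Ico_eq_prod_range]
      simp only [Nat.add_sub_cancel, Nat.cast_zero, add_zero]
      rw [mul_comm]
      congr 1
      apply Finset.prod_congr rfl
      intro x _
      push_cast
      ring
    have hP2 : ∏ l ∈ range (k+1), (((i+1:ℕ):ℝ) + l)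
        = (∏ j ∈ Icc 1 k, ((i:ℝ) + j)) * ((i:ℝ) + (k+1)) := by
      have : ∏ l ∈ range (k+1), (((i+1:ℕ):ℝ) + l) = ∏ j ∈ Icc 1 (k+1), ((i:ℝ) + j) := by
        rw [show Icc 1 (k+1) = Ico 1 (k+2) from rfl, Finset.prod_Ico_eq_prod_range]
        simp only [Nat.add_sub_cancel, show k+2-1 = k+1 from rfl]
        apply Finset.prod_congr rfl
        intro x _
        push_cast
        ring
      rw [this, Finset.prod_Icc_succ_top (Nat.le_add_left 1 k)]
      push_cast
      ring
    have hQ2 : ∏ l ∈ range (k+2), (H + ↑(i+1) + l)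
        = (∏ l ∈ range (k+3), (H + i + l)) / (H + i) := by
      have hne : (H:ℝ) + i ≠ 0 := by
        have : (0:ℝ) ≤ (i:ℕ) := Nat.cast_nonneg _
        intro h; linarith [h]
      rw [eq_div_iff hne]
      rw [show k+3 = (k+2)+1 from rfl, Finset.prod_range_succ' (fun l : ℕ => (H + i + l)) (k+2)]
      simp only [Nat.cast_zero, add_zero]
      congr 1
      apply Finset.prod_congr rfl
      intro x _
      push_cast
      ring
    have hQ3 : ∏ l ∈ range (k+3), (H + i + l)
        = (∏ l ∈ range (k+2), (H + i + l)) * (H + i + (k+2)) := by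
      rw [show k+3 = (k+2)+1 from rfl, Finset.prod_range_succ]
      push_cast
      ring_nf
    rw [hP1, hP2, hQ2, hQ3]
    have hq2 : (0:ℝ) < ∏ l ∈ range (k + 2), (H + i + l) := prodQ_pos H hH i (k+2)
    have hne : (H:ℝ) + i ≠ 0 := by
      have : (0:ℝ) ≤ (i:ℕ) := Nat.cast_nonneg _
      intro h; linarith [h]
    have hne2 : (H:ℝ) + i + (k+2) ≠ 0 := by
      have h1 : (0:ℝ) ≤ (i:ℕ) := Nat.cast_nonneg _
      have h2 : (0:ℝ) ≤ (k:ℕ) := Nat.cast_nonneg _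
      intro h; linarith [h]
    rw [Finset.prod_Icc_succ_top (Nat.le_add_left 1 k)]
    field_simp
    push_cast
    ring
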